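/- Let 0 < c < A and define f : [0,1] → [0,1] by f(α) = 1 - ((A + c)/(A - c))·α for α ∈ [0, (A - c)/(2A)], and f(α) = ((A - c)/(A + c))·(1 - α) for α ∈ ((A - c)/(2A), 1]. Then the functional kl(f) = -∫₀¹ log|f'(x)| dx (where f' is the derivative of f, defined almost everywhere) satisfies kl(f) = (c/A) · log((A + c)/(A - c)). -/

import Mathlib

/-- The piecewise-linear trade-off function of the stochastic binary mechanism with scale `A`
and input bound `c`. -/
noncomputable def fBin (A c α : ℝ) : ℝ :=
  if α ≤ (A - c) / (2 * A) then 1 - ((A + c) / (A - c)) * α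
  else ((A - c) / (A + c)) * (1 - α)

/-- `kl(f) = -∫₀¹ log |f'(x)| dx = (c/A) · log ((A + c)/(A - c))` for the piecewise-linear
trade-off function `f = fBin A c` of the stochastic binary mechanism. -/
theorem kl_fBin (A c : ℝ) (hc : 0 < c) (hcA : c < A) :
    -(∫ x in (0 : ℝ)..1, Real.log |deriv (fBin A c) x|) =
      (c / A) * Real.log ((A + c) / (A - c)) := by
  have hA : 0 < A := hc.trans hcA
  set m : ℝ := (A - c) / (2 * A) with hm
  set r : ℝ := (A + c) / (A - c) with hr
  have hAc : 0 < A - c := by linarith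
  have hAc' : 0 < A + c := by linarith
  have hrpos : 0 < r := div_pos hAc' hAc
  have hm0 : 0 < m := div_pos hAc (by linarith)
  have hm1 : m < 1 := by
    rw [hm, div_lt_one (by linarith)]; linarith
  -- derivative on (0, m)
  have hd1 : ∀ x : ℝ, x < m → deriv (fBin A c) x = -r := by
    intro x hx
    have heq : fBin A c =ᶠ[nhds x] fun α => 1 - r * α := by
      filter_upwards [Iio_mem_nhds hx] with y hy
      have hy' : y ≤ (A - c) / (2 * A) := le_of_lt hy
      simp [fBin, if_pos hy', hr]
    rw [heq.deriv_eq]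
    have : HasDerivAt (fun α : ℝ => 1 - r * α) (-(r * 1)) x :=
      ((hasDerivAt_id x).const_mul r).const_sub 1
    simpa using this.deriv
  -- derivative on (m, 1)
  have hd2 : ∀ x : ℝ, m < x → deriv (fBin A c) x = -r⁻¹ := by
    intro x hx
    have heq : fBin A c =ᶠ[nhds x] fun α => r⁻¹ * (1 - α) := by
      filter_upwards [Ioi_mem_nhds hx] with y hy
      have hy' : ¬ y ≤ (A - c) / (2 * A) := not_le.mpr hy
      simp [fBin, if_neg hy', hr]
    rw [heq.deriv_eq]
    have : HasDerivAt (fun α : ℝ => r⁻¹ * (1 - α)) (r⁻¹ * (-1)) x :=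
      ((hasDerivAt_id x).const_sub 1).const_mul r⁻¹
    simpa using this.deriv
  have hae1 : (fun x => Real.log |deriv (fBin A c) x|)
      =ᵐ[MeasureTheory.volume.restrict (Set.uIoc (0:ℝ) m)] fun _ => Real.log r := by
    rw [Set.uIoc_of_le hm0.le]
    have hne : ∀ᵐ x : ℝ, x ≠ m := by
      rw [MeasureTheory.ae_iff]
      simpa using Real.volume_singleton (a := m)
    filter_upwards [MeasureTheory.ae_restrict_mem measurableSet_Ioc,
      MeasureTheory.ae_restrict_of_ae hne] with x hx hxm
    rw [hd1 x (lt_of_le_of_ne hx.2 hxm), abs_neg, abs_of_pos hrpos]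
  have hae2 : (fun x => Real.log |deriv (fBin A c) x|)
      =ᵐ[MeasureTheory.volume.restrict (Set.uIoc m (1:ℝ))] fun _ => -Real.log r := by
    rw [Set.uIoc_of_le hm1.le]
    filter_upwards [MeasureTheory.ae_restrict_mem measurableSet_Ioc] with x hx
    rw [hd2 x hx.1, abs_neg, abs_of_pos (inv_pos.mpr hrpos), Real.log_inv]
  have hi1 : IntervalIntegrable (fun x => Real.log |deriv (fBin A c) x|)
      MeasureTheory.volume 0 m := by
    rw [intervalIntegrable_iff]
    exact (MeasureTheory.integrableOn_const (μ := MeasureTheory.volume) (s := Set.uIoc 0 m)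
      (by rw [Set.uIoc_of_le hm0.le]; exact measure_Ioc_lt_top.ne) enorm_ne_top).congr hae1.symm
  have hi2 : IntervalIntegrable (fun x => Real.log |deriv (fBin A c) x|)
      MeasureTheory.volume m 1 := by
    rw [intervalIntegrable_iff]
    exact (MeasureTheory.integrableOn_const (μ := MeasureTheory.volume) (s := Set.uIoc m 1)
      (by rw [Set.uIoc_of_le hm1.le]; exact measure_Ioc_lt_top.ne) enorm_ne_top).congr hae2.symm
  rw [← intervalIntegral.integral_add_adjacent_intervals hi1 hi2,
    intervalIntegral.integral_congr_ae (MeasureTheory.ae_imp_of_ae_restrict hae1),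
    intervalIntegral.integral_congr_ae (MeasureTheory.ae_imp_of_ae_restrict hae2),
    intervalIntegral.integral_const, intervalIntegral.integral_const]
  have hmval : (1 : ℝ) - 2 * m = c / A := by
    rw [hm]; field_simp; ring
  simp only [smul_eq_mul]
  have : -((m - 0) * Real.log r + (1 - m) * -Real.log r) = (1 - 2 * m) * Real.log r := by
    ring
  rw [this, hmval]
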